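/- Let M ∈ ℝ^{m×n} with s < min(m,n) be partitioned in blocks A_M, B_M, F_M, C_M, and let M_lg be its best rank-s approximation with conformal blocks A_lg, B_lg, F_lg, C_lg. If A_M and A_lg are nonsingular, then ‖F_M·A_M^{-1}·B_M − C_lg‖₂ ≤ (σ_{s+1}(M)/σ_s(A_M)) · ( σ₁(M)²/σ_s(A_lg) + 2σ₁(M) + σ_{s+1}(M) ). -/

import Mathlib

open Matrix
open scoped Matrix.Norms.L2Operator

/-- `sv A k` is the `k`-th largest singular value (1-indexed) of the real matrix `A`,
computed as the `k`-th largest square root of an eigenvalue of `Aᵀ * A`. -/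
noncomputable def sv {p q : ℕ} (A : Matrix (Fin p) (Fin q) ℝ) (k : ℕ) : ℝ :=
  if h : q - k < q then
    (fun i : Fin q => Real.sqrt ((Matrix.isHermitian_conjTranspose_mul_self A).eigenvalues i))
      (Tuple.sort (fun i : Fin q =>
        Real.sqrt ((Matrix.isHermitian_conjTranspose_mul_self A).eigenvalues i)) ⟨q - k, h⟩)
  else 0

section Base
variable {p q : ℕ}

lemma dot_self_nonneg' (v : Fin p → ℝ) : 0 ≤ v ⬝ᵥ v :=
  Finset.sum_nonneg fun _ _ => mul_self_nonneg _

lemma euclid_norm_sq (v : Fin p → ℝ) :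
    ‖(WithLp.equiv 2 (Fin p → ℝ)).symm v‖ ^ 2 = v ⬝ᵥ v := by
  rw [EuclideanSpace.norm_eq, Real.sq_sqrt (Finset.sum_nonneg fun i _ => sq_nonneg _)]
  simp [dotProduct, Real.norm_eq_abs, sq_abs, pow_two]

lemma opNorm_le_of_dot (A : Matrix (Fin p) (Fin q) ℝ) {c : ℝ} (hc : 0 ≤ c)
    (h : ∀ x : Fin q → ℝ, (A *ᵥ x) ⬝ᵥ (A *ᵥ x) ≤ c ^ 2 * (x ⬝ᵥ x)) : ‖A‖ ≤ c := by
  rw [Matrix.l2_opNorm_def]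
  refine ContinuousLinearMap.opNorm_le_bound _ hc fun x => ?_
  have key : ((Matrix.toEuclideanLin.trans LinearMap.toContinuousLinearMap) A) x =
      (WithLp.equiv 2 (Fin p → ℝ)).symm (A *ᵥ ((WithLp.equiv 2 (Fin q → ℝ)) x)) := by
    exact Matrix.toEuclideanLin_apply A x
  rw [key]
  set y := (WithLp.equiv 2 (Fin q → ℝ)) x with hy
  have hxy : x = (WithLp.equiv 2 (Fin q → ℝ)).symm y := rfl
  rw [hxy]
  have h1 : ‖(WithLp.equiv 2 (Fin p → ℝ)).symm (A *ᵥ y)‖ ^ 2 ≤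
      (c * ‖(WithLp.equiv 2 (Fin q → ℝ)).symm y‖) ^ 2 := by
    rw [euclid_norm_sq, mul_pow, euclid_norm_sq]
    exact h y
  exact (pow_le_pow_iff_left₀ (norm_nonneg _) (by positivity) two_ne_zero).mp h1

lemma dot_mulVec_le (A : Matrix (Fin p) (Fin q) ℝ) (v : Fin q → ℝ) :
    (A *ᵥ v) ⬝ᵥ (A *ᵥ v) ≤ ‖A‖ ^ 2 * (v ⬝ᵥ v) := by
  have := Matrix.l2_opNorm_mulVec A ((WithLp.equiv 2 (Fin q → ℝ)).symm v)
  have h2 : ‖(EuclideanSpace.equiv (Fin p) ℝ).symm (A *ᵥ ((WithLp.equiv 2 (Fin q → ℝ)).symm v))‖ ^ 2 ≤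
      (‖A‖ * ‖(WithLp.equiv 2 (Fin q → ℝ)).symm v‖) ^ 2 :=
    pow_le_pow_left₀ (norm_nonneg _) this 2
  calc (A *ᵥ v) ⬝ᵥ (A *ᵥ v)
      = ‖(WithLp.equiv 2 (Fin p → ℝ)).symm (A *ᵥ v)‖ ^ 2 := (euclid_norm_sq _).symm
    _ ≤ (‖A‖ * ‖(WithLp.equiv 2 (Fin q → ℝ)).symm v‖) ^ 2 := h2
    _ = ‖A‖ ^ 2 * (v ⬝ᵥ v) := by rw [mul_pow, euclid_norm_sq]

lemma le_opNorm_of_unit (A : Matrix (Fin p) (Fin q) ℝ) {c : ℝ} (hc : 0 ≤ c)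
    (x : Fin q → ℝ) (hx : x ⬝ᵥ x = 1) (h : c ^ 2 ≤ (A *ᵥ x) ⬝ᵥ (A *ᵥ x)) : c ≤ ‖A‖ := by
  have h2 : c ^ 2 ≤ ‖A‖ ^ 2 := by
    calc c ^ 2 ≤ (A *ᵥ x) ⬝ᵥ (A *ᵥ x) := h
      _ ≤ ‖A‖ ^ 2 * (x ⬝ᵥ x) := dot_mulVec_le A x
      _ = ‖A‖ ^ 2 := by rw [hx, mul_one]
  exact (pow_le_pow_iff_left₀ hc (norm_nonneg _) two_ne_zero).mp h2
lemma dot_tmul (A : Matrix (Fin p) (Fin q) ℝ) (x : Fin q → ℝ) :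
    (A *ᵥ x) ⬝ᵥ (A *ᵥ x) = x ⬝ᵥ ((Aᴴ * A) *ᵥ x) := by
  have : Aᴴ = Aᵀ := by ext i j; simp [conjTranspose_apply]
  rw [this, ← Matrix.mulVec_mulVec, Matrix.dotProduct_mulVec x, Matrix.vecMul_transpose]

lemma quad_repr (A : Matrix (Fin p) (Fin q) ℝ) (x : Fin q → ℝ) :
    ∃ y : Fin q → ℝ, x ⬝ᵥ x = y ⬝ᵥ y ∧
      (A *ᵥ x) ⬝ᵥ (A *ᵥ x) =
      ∑ i, (Matrix.isHermitian_conjTranspose_mul_self A).eigenvalues i * (y i * y i) := by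
  set hB := Matrix.isHermitian_conjTranspose_mul_self A with hBdef
  set W : Matrix (Fin q) (Fin q) ℝ := (hB.eigenvectorUnitary : Matrix (Fin q) (Fin q) ℝ) with hW
  have hWW : W * star W = 1 := (Matrix.mem_unitaryGroup_iff).mp hB.eigenvectorUnitary.2
  have hWW' : star W * W = 1 := (Matrix.mem_unitaryGroup_iff').mp hB.eigenvectorUnitary.2
  have hstar : star W = Wᵀ := by ext i j; simp [Matrix.star_apply]
  refine ⟨Wᵀ *ᵥ x, ?_, ?_⟩
  · have h1 : (Wᵀ *ᵥ x) ⬝ᵥ (Wᵀ *ᵥ x) = x ⬝ᵥ (((Wᵀ)ᴴ * Wᵀ) *ᵥ x) := dot_tmul Wᵀ x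
    have h2 : (Wᵀ)ᴴ = W := by ext i j; simp [conjTranspose_apply]
    rw [h1, h2, ← hstar, hWW]
    simp
  · rw [dot_tmul]
    have hspec : Aᴴ * A = W * diagonal (RCLike.ofReal ∘ hB.eigenvalues) * star W :=
      hB.spectral_theorem
    have hkey := congrArg (fun N : Matrix (Fin q) (Fin q) ℝ => x ⬝ᵥ N *ᵥ x) hspec
    rw [hkey, hstar]
    have hd : (diagonal (RCLike.ofReal ∘ hB.eigenvalues) : Matrix (Fin q) (Fin q) ℝ) =
        diagonal hB.eigenvalues := by
      congr 1
    rw [hd]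
    rw [← Matrix.mulVec_mulVec, ← Matrix.mulVec_mulVec]
    rw [Matrix.dotProduct_mulVec x W]
    have : x ᵥ* W = Wᵀ *ᵥ x := by rw [← Matrix.vecMul_transpose, Matrix.transpose_transpose]
    rw [this]
    set y := Wᵀ *ᵥ x
    simp [Matrix.mulVec_diagonal, dotProduct]
    exact Finset.sum_congr rfl fun i _ => by ring
lemma sum_fin_ite (f : Fin q → ℝ) (v : ℕ) :
    (∑ j : Fin q, if (j : ℕ) = v then f j else 0) = if h : v < q then f ⟨v, h⟩ else 0 := by
  by_cases h : v < q
  · rw [dif_pos h, Finset.sum_eq_single ⟨v, h⟩]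
    · simp
    · intro b _ hb
      rw [if_neg]
      exact fun hh => hb (Fin.ext hh)
    · simp
  · rw [dif_neg h]
    exact Finset.sum_eq_zero fun j _ => if_neg (by omega)

lemma sv_nonneg (A : Matrix (Fin p) (Fin q) ℝ) (k : ℕ) : 0 ≤ sv A k := by
  unfold sv
  split
  · exact Real.sqrt_nonneg _
  · exact le_refl 0

lemma sv_eq (A : Matrix (Fin p) (Fin q) ℝ) {k : ℕ} (hk1 : 1 ≤ k) (hkq : k ≤ q) :
    sv A k = Real.sqrt ((Matrix.isHermitian_conjTranspose_mul_self A).eigenvalues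
      (Tuple.sort (fun i : Fin q =>
        Real.sqrt ((Matrix.isHermitian_conjTranspose_mul_self A).eigenvalues i))
        ⟨q - k, by omega⟩)) := by
  unfold sv
  rw [dif_pos (by omega : q - k < q)]

lemma sv_antitone (A : Matrix (Fin p) (Fin q) ℝ) {k k' : ℕ}
    (h1 : 1 ≤ k) (h2 : k ≤ k') (h3 : k' ≤ q) : sv A k' ≤ sv A k := by
  rw [sv_eq A h1 (le_trans h2 h3), sv_eq A (le_trans h1 h2) h3]
  have := Tuple.monotone_sort (fun i : Fin q =>
    Real.sqrt ((Matrix.isHermitian_conjTranspose_mul_self A).eigenvalues i))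
  exact this (by simp [Fin.le_def]; omega :
    (⟨q - k', by omega⟩ : Fin q) ≤ (⟨q - k, by omega⟩ : Fin q))

lemma eigen_le_sv_one_sq (A : Matrix (Fin p) (Fin q) ℝ) (hq : 1 ≤ q) (i : Fin q) :
    (Matrix.isHermitian_conjTranspose_mul_self A).eigenvalues i ≤ (sv A 1) ^ 2 := by
  set g := fun i : Fin q => Real.sqrt ((Matrix.isHermitian_conjTranspose_mul_self A).eigenvalues i)
    with hg
  have h1 : g i ≤ sv A 1 := by
    rw [sv_eq A le_rfl hq]
    have hmono := Tuple.monotone_sort g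
    have : g i = (g ∘ Tuple.sort g) ((Tuple.sort g)⁻¹ i) := by simp
    rw [this]
    refine hmono ?_
    have := ((Tuple.sort g)⁻¹ i).isLt
    simp only [Fin.le_def]
    omega
  have hnn := Matrix.eigenvalues_conjTranspose_mul_self_nonneg A i
  calc (Matrix.isHermitian_conjTranspose_mul_self A).eigenvalues i = (g i) ^ 2 := by
        rw [hg]; exact (Real.sq_sqrt hnn).symm
    _ ≤ (sv A 1) ^ 2 := pow_le_pow_left₀ (Real.sqrt_nonneg _) h1 2

lemma sv_q_sq_le_eigen (A : Matrix (Fin p) (Fin q) ℝ) (hq : 1 ≤ q) (i : Fin q) :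
    (sv A q) ^ 2 ≤ (Matrix.isHermitian_conjTranspose_mul_self A).eigenvalues i := by
  set g := fun i : Fin q => Real.sqrt ((Matrix.isHermitian_conjTranspose_mul_self A).eigenvalues i)
    with hg
  have h1 : sv A q ≤ g i := by
    rw [sv_eq A hq le_rfl]
    have hmono := Tuple.monotone_sort g
    have : g i = (g ∘ Tuple.sort g) ((Tuple.sort g)⁻¹ i) := by simp
    rw [this]
    exact hmono (by simp [Fin.le_def] :
      ((⟨q - q, by omega⟩ : Fin q) ≤ (Tuple.sort g)⁻¹ i))
  have hnn := Matrix.eigenvalues_conjTranspose_mul_self_nonneg A i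
  calc (sv A q) ^ 2 ≤ (g i) ^ 2 := pow_le_pow_left₀ (sv_nonneg A q) h1 2
    _ = _ := by rw [hg]; exact Real.sq_sqrt hnn

lemma exists_eigen_sv_one (A : Matrix (Fin p) (Fin q) ℝ) (hq : 1 ≤ q) :
    ∃ i, (Matrix.isHermitian_conjTranspose_mul_self A).eigenvalues i = (sv A 1) ^ 2 := by
  refine ⟨Tuple.sort (fun i : Fin q =>
    Real.sqrt ((Matrix.isHermitian_conjTranspose_mul_self A).eigenvalues i)) ⟨q - 1, by omega⟩, ?_⟩
  rw [sv_eq A le_rfl hq, Real.sq_sqrt (Matrix.eigenvalues_conjTranspose_mul_self_nonneg A _)]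


lemma sv_one_eq_norm (A : Matrix (Fin p) (Fin q) ℝ) (hq : 1 ≤ q) : sv A 1 = ‖A‖ := by
  refine le_antisymm ?_ ?_
  · obtain ⟨i, hi⟩ := exists_eigen_sv_one A hq
    set hB := Matrix.isHermitian_conjTranspose_mul_self A
    set b : Fin q → ℝ := ⇑(hB.eigenvectorBasis i) with hbdef
    have hb1 : b ⬝ᵥ b = 1 := by
      have hnorm : ‖hB.eigenvectorBasis i‖ = 1 := hB.eigenvectorBasis.orthonormal.1 i
      have : ‖(WithLp.equiv 2 (Fin q → ℝ)).symm b‖ ^ 2 = b ⬝ᵥ b := euclid_norm_sq b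
      rw [← this]
      have hbb : (WithLp.equiv 2 (Fin q → ℝ)).symm b = hB.eigenvectorBasis i := rfl
      rw [hbb, hnorm]; norm_num
    refine le_opNorm_of_unit A (sv_nonneg A 1) b hb1 ?_
    rw [dot_tmul]
    have hmv : (Aᴴ * A) *ᵥ b = hB.eigenvalues i • b := hB.mulVec_eigenvectorBasis i
    rw [hmv, dotProduct_smul, hb1]
    rw [hi]
    simp
  · refine opNorm_le_of_dot A (sv_nonneg A 1) fun x => ?_
    obtain ⟨y, hxy, hAy⟩ := quad_repr A x
    rw [hAy, hxy]
    have : (sv A 1) ^ 2 * (y ⬝ᵥ y) = ∑ i, (sv A 1) ^ 2 * (y i * y i) := by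
      rw [dotProduct, Finset.mul_sum]
    rw [this]
    exact Finset.sum_le_sum fun i _ =>
      mul_le_mul_of_nonneg_right (eigen_le_sv_one_sq A hq i) (mul_self_nonneg _)

lemma dot_ge_sv_last {s : ℕ} (A : Matrix (Fin p) (Fin s) ℝ) (hs : 1 ≤ s) (x : Fin s → ℝ) :
    (sv A s) ^ 2 * (x ⬝ᵥ x) ≤ (A *ᵥ x) ⬝ᵥ (A *ᵥ x) := by
  obtain ⟨y, hxy, hAy⟩ := quad_repr A x
  rw [hAy, hxy]
  have : (sv A s) ^ 2 * (y ⬝ᵥ y) = ∑ i, (sv A s) ^ 2 * (y i * y i) := by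
    rw [dotProduct, Finset.mul_sum]
  rw [this]
  exact Finset.sum_le_sum fun i _ =>
    mul_le_mul_of_nonneg_right (sv_q_sq_le_eigen A hs i) (mul_self_nonneg _)

lemma sv_last_pos {s : ℕ} (A : Matrix (Fin s) (Fin s) ℝ) (hs : 1 ≤ s)
    (hdet : IsUnit A.det) : 0 < sv A s := by
  have hBdet : (Aᴴ * A).det = A.det * A.det := by
    rw [Matrix.det_mul]
    congr 1
    have : Aᴴ = Aᵀ := by ext i j; simp [conjTranspose_apply]
    rw [this, Matrix.det_transpose]
  have hprod : ∏ i, (Matrix.isHermitian_conjTranspose_mul_self A).eigenvalues i ≠ 0 := by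
    have := (Matrix.isHermitian_conjTranspose_mul_self A).det_eq_prod_eigenvalues
    have hne : (Aᴴ * A).det ≠ 0 := by
      rw [hBdet]
      exact mul_ne_zero hdet.ne_zero hdet.ne_zero
    rw [this] at hne
    simpa using hne
  rw [sv_eq A hs le_rfl]
  set i := Tuple.sort (fun i : Fin s =>
    Real.sqrt ((Matrix.isHermitian_conjTranspose_mul_self A).eigenvalues i)) ⟨s - s, by omega⟩
  have hnn := Matrix.eigenvalues_conjTranspose_mul_self_nonneg A i
  have hne : (Matrix.isHermitian_conjTranspose_mul_self A).eigenvalues i ≠ 0 :=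
    Finset.prod_ne_zero_iff.mp hprod i (Finset.mem_univ i)
  exact Real.sqrt_pos.mpr (lt_of_le_of_ne hnn (Ne.symm hne))

lemma norm_inv_le {s : ℕ} (A : Matrix (Fin s) (Fin s) ℝ) (hs : 1 ≤ s)
    (hdet : IsUnit A.det) : ‖A⁻¹‖ ≤ (sv A s)⁻¹ := by
  have hpos := sv_last_pos A hs hdet
  refine opNorm_le_of_dot A⁻¹ (by positivity) fun y => ?_
  have hx : A *ᵥ (A⁻¹ *ᵥ y) = y := by
    rw [Matrix.mulVec_mulVec, Matrix.mul_nonsing_inv A hdet, Matrix.one_mulVec]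
  have h1 := dot_ge_sv_last A hs (A⁻¹ *ᵥ y)
  rw [hx] at h1
  have h2 : (A⁻¹ *ᵥ y) ⬝ᵥ (A⁻¹ *ᵥ y) ≤ (sv A s)⁻¹ ^ 2 * (y ⬝ᵥ y) := by
    rw [inv_pow]
    have hsq : (0:ℝ) < sv A s ^ 2 := by positivity
    rw [mul_comm] at h1
    rw [← le_div_iff₀ hsq] at h1
    calc (A⁻¹ *ᵥ y) ⬝ᵥ (A⁻¹ *ᵥ y) ≤ (y ⬝ᵥ y) / (sv A s ^ 2) := h1
      _ = (sv A s ^ 2)⁻¹ * (y ⬝ᵥ y) := by rw [div_eq_inv_mul]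
  exact h2

lemma norm_orthcols_le_one (W : Matrix (Fin p) (Fin q) ℝ) (hW : Wᵀ * W = 1) : ‖W‖ ≤ 1 := by
  refine opNorm_le_of_dot W zero_le_one fun x => ?_
  rw [dot_tmul]
  have : Wᴴ = Wᵀ := by ext i j; simp [conjTranspose_apply]
  rw [this, hW, Matrix.one_mulVec, one_pow, one_mul]
section Chunk2
variable {p q p' q' : ℕ}

lemma norm_submatrix_le (X : Matrix (Fin p) (Fin q) ℝ)
    (r : Fin p' → Fin p) (c : Fin q' → Fin q)
    (hr : Function.Injective r) (hc : Function.Injective c) :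
    ‖X.submatrix r c‖ ≤ ‖X‖ := by
  refine opNorm_le_of_dot _ (norm_nonneg X) fun x => ?_
  set x' : Fin q → ℝ := Function.extend c x (fun _ => (0:ℝ)) with hx'
  have hext : ∀ j', x' (c j') = x j' := fun j' => hc.extend_apply x (fun _ => (0:ℝ)) j'
  have hout : ∀ j : Fin q, j ∉ Finset.image c Finset.univ → x' j = 0 := by
    intro j hj
    refine Function.extend_apply' x (fun _ => (0:ℝ)) j ?_
    rintro ⟨a, ha⟩
    exact hj (Finset.mem_image.mpr ⟨a, Finset.mem_univ a, ha⟩)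
  have fact2 : ∀ i', (X.submatrix r c *ᵥ x) i' = (X *ᵥ x') (r i') := by
    intro i'
    have h1 : (X *ᵥ x') (r i') = ∑ j : Fin q, X (r i') j * x' j := rfl
    have h2 : ∑ j ∈ Finset.image c Finset.univ, X (r i') j * x' j
        = ∑ j : Fin q, X (r i') j * x' j := by
      refine Finset.sum_subset (Finset.subset_univ _) fun j _ hj => ?_
      rw [hout j hj, mul_zero]
    have h3 : ∑ j ∈ Finset.image c Finset.univ, X (r i') j * x' j
        = ∑ j' : Fin q', X (r i') (c j') * x' (c j') :=
      Finset.sum_image fun a _ b _ hab => hc hab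
    rw [h1, ← h2, h3]
    simp only [hext]
    rfl
  have fact1 : x' ⬝ᵥ x' = x ⬝ᵥ x := by
    unfold dotProduct
    have h2 : ∑ j ∈ Finset.image c Finset.univ, x' j * x' j = ∑ j : Fin q, x' j * x' j := by
      refine Finset.sum_subset (Finset.subset_univ _) fun j _ hj => ?_
      rw [hout j hj, mul_zero]
    have h3 : ∑ j ∈ Finset.image c Finset.univ, x' j * x' j
        = ∑ j' : Fin q', x' (c j') * x' (c j') :=
      Finset.sum_image fun a _ b _ hab => hc hab
    rw [← h2, h3]
    simp only [hext]
  have step : (X.submatrix r c *ᵥ x) ⬝ᵥ (X.submatrix r c *ᵥ x)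
      ≤ (X *ᵥ x') ⬝ᵥ (X *ᵥ x') := by
    unfold dotProduct
    simp only [fact2]
    have h4 : ∑ i' : Fin p', (X *ᵥ x') (r i') * (X *ᵥ x') (r i')
        = ∑ i ∈ Finset.image r Finset.univ, (X *ᵥ x') i * (X *ᵥ x') i :=
      (Finset.sum_image (g := r) (f := fun i => (X *ᵥ x') i * (X *ᵥ x') i)
        fun a _ b _ hab => hr hab).symm
    rw [h4]
    exact Finset.sum_le_sum_of_subset_of_nonneg (Finset.subset_univ _)
      fun i _ _ => mul_self_nonneg _
  calc (X.submatrix r c *ᵥ x) ⬝ᵥ (X.submatrix r c *ᵥ x)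
      ≤ (X *ᵥ x') ⬝ᵥ (X *ᵥ x') := step
    _ ≤ ‖X‖ ^ 2 * (x' ⬝ᵥ x') := dot_mulVec_le X x'
    _ = ‖X‖ ^ 2 * (x ⬝ᵥ x) := by rw [fact1]

lemma norm_diaglike_le (d : Fin p → ℝ) (P : Fin p → Prop) [DecidablePred P] {c : ℝ}
    (hc : 0 ≤ c) (hd : ∀ i : Fin p, (i : ℕ) < q → P i → |d i| ≤ c) :
    ‖(Matrix.of fun (i : Fin p) (j : Fin q) =>
        if (i : ℕ) = (j : ℕ) ∧ P i then d i else 0)‖ ≤ c := by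
  set D := (Matrix.of fun (i : Fin p) (j : Fin q) =>
      if (i : ℕ) = (j : ℕ) ∧ P i then d i else 0) with hD
  refine opNorm_le_of_dot _ hc fun x => ?_
  have happ : ∀ i : Fin p, (D *ᵥ x) i =
      if h : (i : ℕ) < q ∧ P i then d i * x ⟨(i : ℕ), h.1⟩ else 0 := by
    intro i
    have h1 : (D *ᵥ x) i = ∑ j : Fin q, (if (i : ℕ) = (j : ℕ) ∧ P i then d i else 0) * x j := rfl
    have h2 : ∀ j : Fin q, (if (i : ℕ) = (j : ℕ) ∧ P i then d i else 0) * x j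
        = if (j : ℕ) = (i : ℕ) then (if P i then d i else 0) * x j else 0 := by
      intro j
      by_cases hij : (i : ℕ) = (j : ℕ) <;> by_cases hP : P i <;>
        simp [hij, hP, eq_comm] <;> tauto
    rw [h1]
    simp only [h2]
    rw [sum_fin_ite (fun j => (if P i then d i else 0) * x j) (i : ℕ)]
    by_cases hq' : (i : ℕ) < q <;> by_cases hP : P i <;> simp [hq', hP]
  have hbound : ∀ i : Fin p, (D *ᵥ x) i * (D *ᵥ x) i
      ≤ c ^ 2 * (if h : (i : ℕ) < q then x ⟨(i : ℕ), h⟩ * x ⟨(i : ℕ), h⟩ else 0) := by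
    intro i
    rw [happ i]
    by_cases h : (i : ℕ) < q ∧ P i
    · rw [dif_pos h, dif_pos h.1]
      have habs := hd i h.1 h.2
      have h1 : d i * x ⟨(i : ℕ), h.1⟩ * (d i * x ⟨(i : ℕ), h.1⟩)
          = (d i * d i) * (x ⟨(i : ℕ), h.1⟩ * x ⟨(i : ℕ), h.1⟩) := by ring
      rw [h1]
      refine mul_le_mul_of_nonneg_right ?_ (mul_self_nonneg _)
      calc d i * d i = |d i| * |d i| := (abs_mul_abs_self _).symm
        _ ≤ c * c := mul_le_mul habs habs (abs_nonneg _) hc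
        _ = c ^ 2 := (sq c).symm
    · rw [dif_neg h]
      simp only [mul_zero, zero_mul]
      refine mul_nonneg (by positivity) ?_
      by_cases hq' : (i : ℕ) < q <;> simp [hq', mul_self_nonneg]
  have hsum : ∑ i : Fin p, (if h : (i : ℕ) < q then x ⟨(i : ℕ), h⟩ * x ⟨(i : ℕ), h⟩ else 0)
      ≤ x ⬝ᵥ x := by
    have hrw : ∀ i : Fin p, (if h : (i : ℕ) < q then x ⟨(i : ℕ), h⟩ * x ⟨(i : ℕ), h⟩ else 0)
        = ∑ j : Fin q, if (j : ℕ) = (i : ℕ) then x j * x j else 0 :=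
      fun i => (sum_fin_ite (fun j => x j * x j) (i : ℕ)).symm
    simp only [hrw]
    rw [Finset.sum_comm]
    unfold dotProduct
    refine Finset.sum_le_sum fun j _ => ?_
    have : ∀ i : Fin p, (if (j : ℕ) = (i : ℕ) then x j * x j else 0)
        = if (i : ℕ) = (j : ℕ) then x j * x j else 0 := by
      intro i; by_cases h : (j : ℕ) = (i : ℕ) <;> simp [h, eq_comm]
    simp only [this]
    rw [sum_fin_ite (fun _ => x j * x j) (j : ℕ)]
    by_cases h : (j : ℕ) < p <;> simp [h, mul_self_nonneg]
  calc (D *ᵥ x) ⬝ᵥ (D *ᵥ x) = ∑ i : Fin p, (D *ᵥ x) i * (D *ᵥ x) i := rfl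
    _ ≤ ∑ i : Fin p, c ^ 2 * (if h : (i : ℕ) < q then x ⟨(i : ℕ), h⟩ * x ⟨(i : ℕ), h⟩ else 0) :=
      Finset.sum_le_sum fun i _ => hbound i
    _ = c ^ 2 * ∑ i : Fin p, (if h : (i : ℕ) < q then x ⟨(i : ℕ), h⟩ * x ⟨(i : ℕ), h⟩ else 0) :=
      (Finset.mul_sum _ _ _).symm
    _ ≤ c ^ 2 * (x ⬝ᵥ x) := mul_le_mul_of_nonneg_left hsum (by positivity)

end Chunk2
section Chunk3

lemma block_formula {s a b : ℕ} (U' : Matrix (Fin a) (Fin s) ℝ) (V' : Matrix (Fin b) (Fin s) ℝ)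
    (σ' : Fin s → ℝ) :
    U' * Matrix.diagonal σ' * V'ᵀ
      = Matrix.of fun i j => ∑ k, U' i k * (σ' k * V' j k) := by
  ext i j
  rw [Matrix.mul_apply]
  simp only [Matrix.mul_diagonal, Matrix.transpose_apply, Matrix.of_apply]
  exact Finset.sum_congr rfl fun k _ => by ring

lemma Mlg_entry {s m n : ℕ} (U : Matrix (Fin (s + m)) (Fin (s + m)) ℝ)
    (V : Matrix (Fin (s + n)) (Fin (s + n)) ℝ) (σ : ℕ → ℝ)
    (i : Fin (s + m)) (j : Fin (s + n)) :
    (U * (Matrix.of fun (i : Fin (s + m)) (j : Fin (s + n)) =>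
      if (i : ℕ) = (j : ℕ) ∧ (i : ℕ) < s then σ ((i : ℕ) + 1) else 0) * Vᵀ) i j
    = ∑ k : Fin s, U i (Fin.castAdd m k) * (σ ((k : ℕ) + 1) * V j (Fin.castAdd n k)) := by
  rw [Matrix.mul_assoc, Matrix.mul_apply]
  have hinner : ∀ w : Fin (s + m),
      ((Matrix.of fun (i : Fin (s + m)) (j : Fin (s + n)) =>
        if (i : ℕ) = (j : ℕ) ∧ (i : ℕ) < s then σ ((i : ℕ) + 1) else 0) * Vᵀ) w j
      = if h : (w : ℕ) < s + n then
          (if (w : ℕ) < s then σ ((w : ℕ) + 1) else 0) * V j ⟨(w : ℕ), h⟩ else 0 := by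
    intro w
    rw [Matrix.mul_apply]
    have h2 : ∀ l : Fin (s + n),
        (Matrix.of fun (i : Fin (s + m)) (j : Fin (s + n)) =>
          if (i : ℕ) = (j : ℕ) ∧ (i : ℕ) < s then σ ((i : ℕ) + 1) else 0) w l
          * Vᵀ l j
        = if (l : ℕ) = (w : ℕ) then
            (if (w : ℕ) < s then σ ((w : ℕ) + 1) else 0) * V j l else 0 := by
      intro l
      simp only [Matrix.of_apply, Matrix.transpose_apply]
      by_cases hwl : (w : ℕ) = (l : ℕ) <;> by_cases hws : (w : ℕ) < s <;>
        simp [hwl, hws, eq_comm]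
    simp only [h2]
    exact sum_fin_ite (fun l => (if (w : ℕ) < s then σ ((w : ℕ) + 1) else 0) * V j l) (w : ℕ)
  simp only [hinner]
  rw [Fin.sum_univ_add]
  have hzero : ∀ k : Fin m, U i (Fin.natAdd s k) *
      (if h : ((Fin.natAdd s k : Fin (s + m)) : ℕ) < s + n then
        (if ((Fin.natAdd s k : Fin (s + m)) : ℕ) < s then
          σ (((Fin.natAdd s k : Fin (s + m)) : ℕ) + 1) else 0) * V j ⟨_, h⟩ else 0) = 0 := by
    intro k
    have hk : ((Fin.natAdd s k : Fin (s + m)) : ℕ) = s + (k : ℕ) := rfl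
    by_cases h : s + (k : ℕ) < s + n
    · rw [dif_pos (by omega)]
      rw [if_neg (by omega)]
      simp
    · rw [dif_neg (by omega)]
      simp
  rw [Finset.sum_congr rfl fun k _ => hzero k]
  simp only [Finset.sum_const, smul_zero, add_zero]
  refine Finset.sum_congr rfl fun k _ => ?_
  have hk : ((Fin.castAdd m k : Fin (s + m)) : ℕ) = (k : ℕ) := rfl
  have hlt : ((Fin.castAdd m k : Fin (s + m)) : ℕ) < s + n := by
    rw [hk]; omega
  rw [dif_pos hlt, if_pos (show ((Fin.castAdd m k : Fin (s + m)) : ℕ) < s from k.isLt)]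
  rfl

lemma nystrom_cancel {s m n : ℕ} (U1 V1 D : Matrix (Fin s) (Fin s) ℝ)
    (U2 : Matrix (Fin m) (Fin s) ℝ) (V2 : Matrix (Fin n) (Fin s) ℝ)
    (hU1 : IsUnit U1.det) (hV1 : IsUnit V1.det) (hD : IsUnit D.det) :
    (U2 * D * V1ᵀ) * (U1 * D * V1ᵀ)⁻¹ * (U1 * D * V2ᵀ) = U2 * D * V2ᵀ := by
  have hV1t : IsUnit (V1ᵀ).det := by rwa [Matrix.det_transpose]
  have hinv : (U1 * D * V1ᵀ)⁻¹ = (V1ᵀ)⁻¹ * (D⁻¹ * U1⁻¹) := by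
    rw [Matrix.mul_inv_rev, Matrix.mul_inv_rev]
  rw [hinv]
  simp only [Matrix.mul_assoc]
  rw [Matrix.mul_nonsing_inv_cancel_left _ _ hV1t]
  rw [Matrix.nonsing_inv_mul_cancel_left _ _ hU1]
  rw [Matrix.nonsing_inv_mul_cancel_left _ _ hD]

end Chunk3
section Chunk4

lemma norm_mul3_le {p q r t : ℕ} (X : Matrix (Fin p) (Fin q) ℝ) (Y : Matrix (Fin q) (Fin r) ℝ)
    (Z : Matrix (Fin r) (Fin t) ℝ) {cx cy cz : ℝ}
    (hx : ‖X‖ ≤ cx) (hy : ‖Y‖ ≤ cy) (hz : ‖Z‖ ≤ cz)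
    (h1 : 0 ≤ cx) (h2 : 0 ≤ cy) (h3 : 0 ≤ cz) :
    ‖X * Y * Z‖ ≤ cx * cy * cz := by
  have hXY : ‖X * Y‖ ≤ cx * cy :=
    le_trans (Matrix.l2_opNorm_mul X Y) (mul_le_mul hx hy (norm_nonneg _) h1)
  exact le_trans (Matrix.l2_opNorm_mul (X * Y) Z)
    (mul_le_mul hXY hz (norm_nonneg _) (by positivity))


/-- Lemma `span_approx_error`: if `A_M` and `A_lg` are
nonsingular, then the Nyström approximation error satisfies
`‖F_M A_M⁻¹ B_M − C_lg‖₂ ≤ (σ_{s+1}(M)/σ_s(A_M)) · (σ₁(M)²/σ_s(A_lg) + 2σ₁(M) + σ_{s+1}(M))`,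
where `M_lg = U Σ_s Vᵀ` is the best rank-`s` (truncated SVD) approximation of `M`
with blocks `A_lg, B_lg, F_lg, C_lg` conformal with those of `M`. -/
theorem stmt8 (m n s : ℕ) (hs : 1 ≤ s) (hm : 1 ≤ m) (hn : 1 ≤ n)
    (M : Matrix (Fin (s + m)) (Fin (s + n)) ℝ)
    (AM : Matrix (Fin s) (Fin s) ℝ)
    (hAMdef : AM = M.submatrix (Fin.castAdd m) (Fin.castAdd n))
    (BM : Matrix (Fin s) (Fin n) ℝ)
    (hBMdef : BM = M.submatrix (Fin.castAdd m) (Fin.natAdd s))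
    (FM : Matrix (Fin m) (Fin s) ℝ)
    (hFMdef : FM = M.submatrix (Fin.natAdd s) (Fin.castAdd n))
    -- the (full) SVD of M:
    (U : Matrix (Fin (s + m)) (Fin (s + m)) ℝ) (hU : Uᵀ * U = 1)
    (V : Matrix (Fin (s + n)) (Fin (s + n)) ℝ) (hV : Vᵀ * V = 1)
    (hSVD : M = U * (Matrix.of fun (i : Fin (s + m)) (j : Fin (s + n)) =>
      if (i : ℕ) = (j : ℕ) then sv M ((i : ℕ) + 1) else 0) * Vᵀ)
    -- the best rank-s approximation of M, by truncating its SVD: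
    (Mlg : Matrix (Fin (s + m)) (Fin (s + n)) ℝ)
    (hMlg : Mlg = U * (Matrix.of fun (i : Fin (s + m)) (j : Fin (s + n)) =>
      if (i : ℕ) = (j : ℕ) ∧ (i : ℕ) < s then sv M ((i : ℕ) + 1) else 0) * Vᵀ)
    (Alg : Matrix (Fin s) (Fin s) ℝ)
    (hAlg : Alg = Mlg.submatrix (Fin.castAdd m) (Fin.castAdd n))
    (Clg : Matrix (Fin m) (Fin n) ℝ)
    (hClg : Clg = Mlg.submatrix (Fin.natAdd s) (Fin.natAdd s))
    (hAM : IsUnit AM.det) (hAlgUnit : IsUnit Alg.det) :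
    sv (FM * AM⁻¹ * BM - Clg) 1 ≤
      (sv M (s + 1) / sv AM s) *
        ((sv M 1) ^ 2 / sv Alg s + 2 * sv M 1 + sv M (s + 1)) := by
  -- injectivity of the embeddings
  have hinjCm : Function.Injective (Fin.castAdd m : Fin s → Fin (s + m)) :=
    Fin.castAdd_injective s m
  have hinjCn : Function.Injective (Fin.castAdd n : Fin s → Fin (s + n)) :=
    Fin.castAdd_injective s n
  have hinjNm : Function.Injective (Fin.natAdd s : Fin m → Fin (s + m)) := by
    intro a b h
    have := congrArg Fin.val h
    simp only [Fin.coe_natAdd] at this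
    exact Fin.ext (by omega)
  have hinjNn : Function.Injective (Fin.natAdd s : Fin n → Fin (s + n)) := by
    intro a b h
    have := congrArg Fin.val h
    simp only [Fin.coe_natAdd] at this
    exact Fin.ext (by omega)
  -- the pieces of the truncated SVD
  set U1 : Matrix (Fin s) (Fin s) ℝ := U.submatrix (Fin.castAdd m) (Fin.castAdd m) with hU1
  set U2 : Matrix (Fin m) (Fin s) ℝ := U.submatrix (Fin.natAdd s) (Fin.castAdd m) with hU2
  set V1 : Matrix (Fin s) (Fin s) ℝ := V.submatrix (Fin.castAdd n) (Fin.castAdd n) with hV1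
  set V2 : Matrix (Fin n) (Fin s) ℝ := V.submatrix (Fin.natAdd s) (Fin.castAdd n) with hV2
  set Dh : Matrix (Fin s) (Fin s) ℝ := Matrix.diagonal (fun k : Fin s => sv M ((k : ℕ) + 1))
    with hDh
  set Blg : Matrix (Fin s) (Fin n) ℝ := Mlg.submatrix (Fin.castAdd m) (Fin.natAdd s) with hBlg
  set Flg : Matrix (Fin m) (Fin s) ℝ := Mlg.submatrix (Fin.natAdd s) (Fin.castAdd n) with hFlg
  have hblock : ∀ (i : Fin (s + m)) (j : Fin (s + n)), Mlg i j =
      ∑ k : Fin s, U i (Fin.castAdd m k) * (sv M ((k : ℕ) + 1) * V j (Fin.castAdd n k)) := by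
    intro i j
    rw [hMlg]
    exact Mlg_entry U V (fun t => sv M t) i j
  have hAlgEq : Alg = U1 * Dh * V1ᵀ := by
    rw [hAlg, hDh, block_formula]
    ext i j
    simp only [Matrix.submatrix_apply, Matrix.of_apply]
    exact hblock _ _
  have hBlgEq : Blg = U1 * Dh * V2ᵀ := by
    rw [hBlg, hDh, block_formula]
    ext i j
    simp only [Matrix.submatrix_apply, Matrix.of_apply]
    exact hblock _ _
  have hFlgEq : Flg = U2 * Dh * V1ᵀ := by
    rw [hFlg, hDh, block_formula]
    ext i j
    simp only [Matrix.submatrix_apply, Matrix.of_apply]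
    exact hblock _ _
  have hClgEq : Clg = U2 * Dh * V2ᵀ := by
    rw [hClg, hDh, block_formula]
    ext i j
    simp only [Matrix.submatrix_apply, Matrix.of_apply]
    exact hblock _ _
  -- invertibility of the factors
  have hdetAlg : Alg.det = U1.det * Dh.det * (V1ᵀ).det := by
    rw [hAlgEq, Matrix.det_mul, Matrix.det_mul]
  have hAlgne : Alg.det ≠ 0 := hAlgUnit.ne_zero
  rw [hdetAlg] at hAlgne
  have hU1det : IsUnit U1.det := isUnit_iff_ne_zero.mpr (by intro h; apply hAlgne; rw [h]; ring)
  have hDhdet : IsUnit Dh.det := isUnit_iff_ne_zero.mpr (by intro h; apply hAlgne; rw [h]; ring)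
  have hV1det : IsUnit V1.det := isUnit_iff_ne_zero.mpr (by
    intro h
    apply hAlgne
    rw [Matrix.det_transpose, h]; ring)
  -- the key algebraic identity
  have hCeq : Clg = Flg * Alg⁻¹ * Blg := by
    rw [hClgEq, hAlgEq, hFlgEq, hBlgEq, nystrom_cancel U1 V1 Dh U2 V2 hU1det hV1det hDhdet]
  -- norm bounds
  have hq1 : 1 ≤ s + n := by omega
  have hMnorm : ‖M‖ = sv M 1 := (sv_one_eq_norm M hq1).symm
  have hUnorm : ‖U‖ ≤ 1 := norm_orthcols_le_one U hU
  have hVtnorm : ‖Vᵀ‖ ≤ 1 := by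
    refine norm_orthcols_le_one Vᵀ ?_
    rw [Matrix.transpose_transpose]
    exact mul_eq_one_comm.mp hV
  have hsv1nn : 0 ≤ sv M 1 := sv_nonneg M 1
  have hsvs1nn : 0 ≤ sv M (s + 1) := sv_nonneg M (s + 1)
  have hMlgnorm : ‖Mlg‖ ≤ sv M 1 := by
    rw [hMlg]
    have hDs : ‖(Matrix.of fun (i : Fin (s + m)) (j : Fin (s + n)) =>
        if (i : ℕ) = (j : ℕ) ∧ (i : ℕ) < s then sv M ((i : ℕ) + 1) else 0)‖ ≤ sv M 1 := by
      refine norm_diaglike_le _ _ hsv1nn fun i hiq hiP => ?_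
      rw [abs_of_nonneg (sv_nonneg M _)]
      exact sv_antitone M le_rfl (by omega) (by omega)
    calc ‖U * _ * Vᵀ‖ ≤ 1 * sv M 1 * 1 :=
          norm_mul3_le _ _ _ hUnorm hDs hVtnorm zero_le_one hsv1nn zero_le_one
      _ = sv M 1 := by ring
  have hMsmnorm : ‖M - Mlg‖ ≤ sv M (s + 1) := by
    have hrepr : M - Mlg = U * (Matrix.of fun (i : Fin (s + m)) (j : Fin (s + n)) =>
        if (i : ℕ) = (j : ℕ) ∧ ¬ ((i : ℕ) < s) then sv M ((i : ℕ) + 1) else 0) * Vᵀ := by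
      conv_lhs => rw [hSVD, hMlg]
      rw [← Matrix.sub_mul, ← Matrix.mul_sub]
      congr 2
      ext i j
      simp only [Matrix.sub_apply, Matrix.of_apply]
      by_cases hij : (i : ℕ) = (j : ℕ)
      · by_cases his : (i : ℕ) < s
        · rw [if_pos hij, if_pos ⟨hij, his⟩, if_neg (by tauto)]; ring
        · rw [if_pos hij, if_neg (by tauto), if_pos ⟨hij, his⟩]; ring
      · rw [if_neg hij, if_neg (by tauto), if_neg (by tauto)]; ring
    rw [hrepr]
    have hDs : ‖(Matrix.of fun (i : Fin (s + m)) (j : Fin (s + n)) =>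
        if (i : ℕ) = (j : ℕ) ∧ ¬ ((i : ℕ) < s) then sv M ((i : ℕ) + 1) else 0)‖
        ≤ sv M (s + 1) := by
      refine norm_diaglike_le _ _ hsvs1nn fun i hiq hiP => ?_
      rw [abs_of_nonneg (sv_nonneg M _)]
      exact sv_antitone M (by omega) (by omega) (by omega)
    calc ‖U * _ * Vᵀ‖ ≤ 1 * sv M (s + 1) * 1 :=
          norm_mul3_le _ _ _ hUnorm hDs hVtnorm zero_le_one hsvs1nn zero_le_one
      _ = sv M (s + 1) := by ring
  -- block norm bounds
  have hBMn : ‖BM‖ ≤ sv M 1 := by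
    rw [hBMdef, ← hMnorm]; exact norm_submatrix_le M _ _ hinjCm hinjNn
  have hFMn : ‖FM‖ ≤ sv M 1 := by
    rw [hFMdef, ← hMnorm]; exact norm_submatrix_le M _ _ hinjNm hinjCn
  have hBlgn : ‖Blg‖ ≤ sv M 1 :=
    le_trans (norm_submatrix_le Mlg _ _ hinjCm hinjNn) hMlgnorm
  have hFlgn : ‖Flg‖ ≤ sv M 1 :=
    le_trans (norm_submatrix_le Mlg _ _ hinjNm hinjCn) hMlgnorm
  have hsubsub : ∀ {a b : ℕ} (r : Fin a → Fin (s + m)) (c : Fin b → Fin (s + n)),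
      M.submatrix r c - Mlg.submatrix r c = (M - Mlg).submatrix r c := by
    intro a b r c; ext i j; simp [Matrix.sub_apply]
  have hBsmn : ‖BM - Blg‖ ≤ sv M (s + 1) := by
    rw [hBMdef, hBlg, hsubsub]
    exact le_trans (norm_submatrix_le (M - Mlg) _ _ hinjCm hinjNn) hMsmnorm
  have hFsmn : ‖FM - Flg‖ ≤ sv M (s + 1) := by
    rw [hFMdef, hFlg, hsubsub]
    exact le_trans (norm_submatrix_le (M - Mlg) _ _ hinjNm hinjCn) hMsmnorm
  have hAsmn : ‖AM - Alg‖ ≤ sv M (s + 1) := by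
    rw [hAMdef, hAlg, hsubsub]
    exact le_trans (norm_submatrix_le (M - Mlg) _ _ hinjCm hinjCn) hMsmnorm
  have hapos : 0 < sv AM s := sv_last_pos AM hs hAM
  have hgpos : 0 < sv Alg s := sv_last_pos Alg hs hAlgUnit
  have hAMinv : ‖AM⁻¹‖ ≤ (sv AM s)⁻¹ := norm_inv_le AM hs hAM
  have hAlginv : ‖Alg⁻¹‖ ≤ (sv Alg s)⁻¹ := norm_inv_le Alg hs hAlgUnit
  -- decomposition identity
  have hmid : AM⁻¹ * (AM - Alg) * Alg⁻¹ = Alg⁻¹ - AM⁻¹ := by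
    rw [Matrix.mul_sub, Matrix.nonsing_inv_mul _ hAM, Matrix.sub_mul, one_mul,
      Matrix.mul_assoc, Matrix.mul_nonsing_inv _ hAlgUnit, Matrix.mul_one]
  have hiden : FM * AM⁻¹ * BM - Clg =
      (FM - Flg) * AM⁻¹ * (BM - Blg) + Flg * AM⁻¹ * (BM - Blg) + (FM - Flg) * AM⁻¹ * Blg
      - Flg * (AM⁻¹ * (AM - Alg) * Alg⁻¹) * Blg := by
    rw [hCeq, hmid]
    simp only [Matrix.sub_mul, Matrix.mul_sub]
    abel
  -- assemble
  have hnormE : ‖FM * AM⁻¹ * BM - Clg‖ ≤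
      sv M (s + 1) * (sv AM s)⁻¹ * sv M (s + 1)
      + sv M 1 * (sv AM s)⁻¹ * sv M (s + 1)
      + sv M (s + 1) * (sv AM s)⁻¹ * sv M 1
      + sv M 1 * ((sv AM s)⁻¹ * sv M (s + 1) * (sv Alg s)⁻¹) * sv M 1 := by
    rw [hiden]
    have hainv : (0:ℝ) ≤ (sv AM s)⁻¹ := by positivity
    have hginv : (0:ℝ) ≤ (sv Alg s)⁻¹ := by positivity
    have h1 : ‖(FM - Flg) * AM⁻¹ * (BM - Blg)‖ ≤ sv M (s + 1) * (sv AM s)⁻¹ * sv M (s + 1) :=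
      norm_mul3_le _ _ _ hFsmn hAMinv hBsmn hsvs1nn hainv hsvs1nn
    have h2 : ‖Flg * AM⁻¹ * (BM - Blg)‖ ≤ sv M 1 * (sv AM s)⁻¹ * sv M (s + 1) :=
      norm_mul3_le _ _ _ hFlgn hAMinv hBsmn hsv1nn hainv hsvs1nn
    have h3 : ‖(FM - Flg) * AM⁻¹ * Blg‖ ≤ sv M (s + 1) * (sv AM s)⁻¹ * sv M 1 :=
      norm_mul3_le _ _ _ hFsmn hAMinv hBlgn hsvs1nn hainv hsv1nn
    have h4mid : ‖AM⁻¹ * (AM - Alg) * Alg⁻¹‖ ≤ (sv AM s)⁻¹ * sv M (s + 1) * (sv Alg s)⁻¹ :=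
      norm_mul3_le _ _ _ hAMinv hAsmn hAlginv hainv hsvs1nn hginv
    have h4 : ‖Flg * (AM⁻¹ * (AM - Alg) * Alg⁻¹) * Blg‖ ≤
        sv M 1 * ((sv AM s)⁻¹ * sv M (s + 1) * (sv Alg s)⁻¹) * sv M 1 :=
      norm_mul3_le _ _ _ hFlgn h4mid hBlgn hsv1nn (by positivity) hsv1nn
    calc ‖(FM - Flg) * AM⁻¹ * (BM - Blg) + Flg * AM⁻¹ * (BM - Blg)
          + (FM - Flg) * AM⁻¹ * Blg - Flg * (AM⁻¹ * (AM - Alg) * Alg⁻¹) * Blg‖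
        ≤ ‖(FM - Flg) * AM⁻¹ * (BM - Blg) + Flg * AM⁻¹ * (BM - Blg)
          + (FM - Flg) * AM⁻¹ * Blg‖ + ‖Flg * (AM⁻¹ * (AM - Alg) * Alg⁻¹) * Blg‖ :=
          norm_sub_le _ _
      _ ≤ ‖(FM - Flg) * AM⁻¹ * (BM - Blg) + Flg * AM⁻¹ * (BM - Blg)‖
          + ‖(FM - Flg) * AM⁻¹ * Blg‖ + ‖Flg * (AM⁻¹ * (AM - Alg) * Alg⁻¹) * Blg‖ := by
          gcongr; exact norm_add_le _ _
      _ ≤ ‖(FM - Flg) * AM⁻¹ * (BM - Blg)‖ + ‖Flg * AM⁻¹ * (BM - Blg)‖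
          + ‖(FM - Flg) * AM⁻¹ * Blg‖ + ‖Flg * (AM⁻¹ * (AM - Alg) * Alg⁻¹) * Blg‖ := by
          gcongr; exact norm_add_le _ _
      _ ≤ _ := add_le_add (add_le_add (add_le_add h1 h2) h3) h4
  have hEsv : sv (FM * AM⁻¹ * BM - Clg) 1 = ‖FM * AM⁻¹ * BM - Clg‖ :=
    sv_one_eq_norm _ hn
  rw [hEsv]
  refine le_trans hnormE (le_of_eq ?_)
  field_simp
  ring
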